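/- Let μ be the probability distribution on perfect matchings of G□K₂ defined by μ(M) = w(M)/Z_n. Then for every S⊆V, the μ-probability that the set of vertices covered by the copy-1 edges of M equals S×{1} is exactly c^{2|S|}·PM(S)² / Σ_{T⊆V} c^{2|T|}·PM(T)². In other words, the pushforward of μ under the map M ↦ S_M (where S_M ⊆ V is the set of vertices matched by M within the first copy of G) equals the distribution μ_{GBS,G}(S) ∝ c^{2|S|}·PM(S)². -/

import Mathlib

open scoped Classical

/-- `M` is a matching of `G`: a finite set of edges of `G` that are pairwise vertex-disjoint. -/
def IsMatchingSet {α : Type*} (G : SimpleGraph α) (M : Finset (Sym2 α)) : Prop :=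
  (∀ e ∈ M, e ∈ G.edgeSet) ∧ ∀ e ∈ M, ∀ f ∈ M, e ≠ f → ∀ v, v ∈ e → v ∉ f

/-- The set of vertices covered by a set of edges `M`. -/
noncomputable def coveredBy {α : Type*} [Fintype α] (M : Finset (Sym2 α)) : Finset α :=
  Finset.univ.filter fun v => ∃ e ∈ M, v ∈ e

/-- `PMcount G S` is the number of perfect matchings of the induced subgraph `G[S]`,
i.e. the number of matchings of `G` covering exactly the vertex set `S`. -/
noncomputable def PMcount {α : Type*} [Fintype α] (G : SimpleGraph α) (S : Finset α) : ℕ :=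
  (Finset.univ.filter fun M : Finset (Sym2 α) => IsMatchingSet G M ∧ coveredBy M = S).card

/-- The weight of a set of edges `M` of `G □ K₂`: `c ^ (2t)` where `t` is the number of
copy edges (edges lying within one of the two copies of `G`) in `M`. -/
noncomputable def wK2 {V : Type*} (c : ℝ) (M : Finset (Sym2 (V × Fin 2))) : ℝ :=
  c ^ (2 * (M.filter fun e => (Sym2.map Prod.snd e).IsDiag).card)

/-- `Zk G c k` is the total weight of the `k`-edge matchings of `G □ K₂`,
where copy edges have weight `c ^ 2` and rung edges have weight `1`. -/
noncomputable def Zk {V : Type*} [Fintype V] (G : SimpleGraph V) (c : ℝ) (k : ℕ) : ℝ :=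
  ∑ M ∈ Finset.univ.filter (fun M : Finset (Sym2 (V × Fin 2)) =>
      IsMatchingSet (G.boxProd (⊤ : SimpleGraph (Fin 2))) M ∧ M.card = k), wK2 c M

/-- `S_M`: the set of vertices `v ∈ V` such that `(v, 1)` (the first copy, labelled `0` here)
is covered by a copy-1 edge of `M`, i.e. the set of vertices matched by `M` within the first
copy of `G`. -/
noncomputable def copyOneCovered {V : Type*} [Fintype V]
    (M : Finset (Sym2 (V × Fin 2))) : Finset V :=
  Finset.univ.filter fun v =>
    ∃ e ∈ M, (v, (0 : Fin 2)) ∈ e ∧ (Sym2.map Prod.snd e).IsDiag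

namespace StmtAux

open Finset

variable {α : Type*} [Fintype α]

/-- vertices of a Sym2 as a Finset -/
noncomputable def eVerts (e : Sym2 α) : Finset α := univ.filter (· ∈ e)

lemma coveredBy_eq_biUnion (M : Finset (Sym2 α)) : coveredBy M = M.biUnion eVerts := by
  ext v; simp [coveredBy, eVerts, mem_biUnion]

lemma eVerts_card {e : Sym2 α} (h : ¬ e.IsDiag) : (eVerts e).card = 2 := by
  induction e using Sym2.inductionOn with
  | hf a b =>
    rw [Sym2.mk_isDiag_iff] at h
    have : eVerts (s(a, b)) = {a, b} := by
      ext x; simp [eVerts, Sym2.mem_iff]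
    rw [this, card_insert_of_notMem (by simp [h]), card_singleton]

lemma coveredBy_card {G : SimpleGraph α} {M : Finset (Sym2 α)}
    (hM : IsMatchingSet G M) : (coveredBy M).card = 2 * M.card := by
  rw [coveredBy_eq_biUnion, card_biUnion]
  · rw [Finset.sum_congr rfl fun e he => eVerts_card (G.not_isDiag_of_mem_edgeSet (hM.1 e he))]
    simp [mul_comm]
  · intro e he f hf hef
    rw [Function.onFun, Finset.disjoint_left]
    intro v hv hvf
    simp only [eVerts, mem_filter] at hv hvf
    exact hM.2 e he f hf hef v hv.2 hvf.2

end StmtAux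

namespace StmtAux2
open Finset StmtAux
set_option linter.unusedSectionVars false

variable {V : Type*} [Fintype V] {G : SimpleGraph V}

local notation "H" => SimpleGraph.boxProd G (⊤ : SimpleGraph (Fin 2))


/-- lift a Sym2 V to level i -/
def lift (i : Fin 2) (f : Sym2 V) : Sym2 (V × Fin 2) := Sym2.map (fun v => (v, i)) f

def rung (v : V) : Sym2 (V × Fin 2) := s((v, (0 : Fin 2)), (v, (1 : Fin 2)))

lemma lift_inj (i : Fin 2) : Function.Injective (lift (V := V) i) :=
  Sym2.map.injective (fun a b h => by simpa using h)

lemma mem_lift {i : Fin 2} {f : Sym2 V} {x : V × Fin 2} :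
    x ∈ lift i f ↔ ∃ u ∈ f, x = (u, i) := by
  simp only [lift, Sym2.mem_map]
  constructor
  · rintro ⟨a, ha, rfl⟩; exact ⟨a, ha, rfl⟩
  · rintro ⟨u, hu, rfl⟩; exact ⟨u, hu, rfl⟩

lemma snd_of_mem_lift {i : Fin 2} {f : Sym2 V} {x : V × Fin 2} (h : x ∈ lift i f) :
    x.2 = i := by
  obtain ⟨u, -, rfl⟩ := mem_lift.1 h; rfl

lemma mem_rung {v : V} {x : V × Fin 2} :
    x ∈ rung v ↔ x = (v, 0) ∨ x = (v, 1) := by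
  simp [rung, Sym2.mem_iff]

lemma fst_of_mem_rung {v : V} {x : V × Fin 2} (h : x ∈ rung v) : x.1 = v := by
  rcases mem_rung.1 h with rfl | rfl <;> rfl

lemma lift_isDiag (i : Fin 2) (f : Sym2 V) : (Sym2.map Prod.snd (lift i f)).IsDiag := by
  induction f using Sym2.inductionOn with
  | hf a b => simp [lift, Sym2.mk_isDiag_iff]

lemma rung_not_isDiag (v : V) : ¬ (Sym2.map Prod.snd (rung v)).IsDiag := by
  simp [rung, Sym2.mk_isDiag_iff]

lemma lift_mem_edgeSet {i : Fin 2} {f : Sym2 V} (hf : f ∈ G.edgeSet) :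
    lift i f ∈ (H).edgeSet := by
  induction f using Sym2.inductionOn with
  | hf a b =>
    simp only [SimpleGraph.mem_edgeSet] at hf
    simp only [lift, Sym2.map_pair_eq, SimpleGraph.mem_edgeSet, SimpleGraph.boxProd_adj]
    exact Or.inl ⟨hf, trivial⟩

lemma rung_mem_edgeSet (v : V) : rung v ∈ (H).edgeSet := by
  simp [rung, SimpleGraph.boxProd_adj]

/-- classification of edges of the box product -/
lemma copy_edge_form {e : Sym2 (V × Fin 2)} (he : e ∈ (H).edgeSet)
    (hd : (Sym2.map Prod.snd e).IsDiag) :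
    ∃ f ∈ G.edgeSet, ∃ i, e = lift i f := by
  induction e using Sym2.inductionOn with
  | hf x y =>
    obtain ⟨a, i⟩ := x; obtain ⟨b, j⟩ := y
    simp only [Sym2.map_pair_eq, Sym2.mk_isDiag_iff] at hd
    subst hd
    simp only [SimpleGraph.mem_edgeSet, SimpleGraph.boxProd_adj, SimpleGraph.top_adj] at he
    rcases he with ⟨hab, -⟩ | ⟨hne, h⟩
    · exact ⟨s(a, b), hab, i, by simp [lift]⟩
    · exact absurd rfl hne

lemma rung_edge_form {e : Sym2 (V × Fin 2)} (he : e ∈ (H).edgeSet)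
    (hd : ¬ (Sym2.map Prod.snd e).IsDiag) : ∃ v, e = rung v := by
  induction e using Sym2.inductionOn with
  | hf x y =>
    obtain ⟨a, i⟩ := x; obtain ⟨b, j⟩ := y
    simp only [Sym2.map_pair_eq, Sym2.mk_isDiag_iff] at hd
    simp only [SimpleGraph.mem_edgeSet, SimpleGraph.boxProd_adj, SimpleGraph.top_adj] at he
    rcases he with ⟨-, hij⟩ | ⟨hne, rfl⟩
    · exact absurd hij hd
    · refine ⟨a, ?_⟩
      fin_cases i <;> fin_cases j <;> simp_all [rung, Sym2.eq_swap]



noncomputable def proj (i : Fin 2) (M : Finset (Sym2 (V × Fin 2))) : Finset (Sym2 V) :=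
  (M.filter fun e => ∀ x ∈ e, x.2 = i).image (Sym2.map Prod.fst)

lemma mem_proj_iff {i : Fin 2} {M : Finset (Sym2 (V × Fin 2))} {f : Sym2 V} :
    f ∈ proj i M ↔ lift i f ∈ M := by
  constructor
  · rintro hf
    simp only [proj, mem_image, mem_filter] at hf
    obtain ⟨e, ⟨heM, hei⟩, rfl⟩ := hf
    convert heM
    induction e using Sym2.inductionOn with
    | hf x y =>
      have hx : x.2 = i := hei x (by simp [Sym2.mem_iff])
      have hy : y.2 = i := hei y (by simp [Sym2.mem_iff])
      simp only [lift, Sym2.map_pair_eq]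
      rw [show ((x.1, i) : V × Fin 2) = x from by rw [← hx],
          show ((y.1, i) : V × Fin 2) = y from by rw [← hy]]
  · intro hf
    simp only [proj, mem_image, mem_filter]
    refine ⟨lift i f, ⟨hf, fun x hx => snd_of_mem_lift hx⟩, ?_⟩
    simp [lift, Sym2.map_map, Function.comp]

lemma proj_isMatchingSet {M : Finset (Sym2 (V × Fin 2))} (hM : IsMatchingSet (H) M)
    (i : Fin 2) : IsMatchingSet G (proj i M) := by
  constructor
  · intro f hf
    have he := hM.1 _ (mem_proj_iff.1 hf)
    induction f using Sym2.inductionOn with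
    | hf a b =>
      simp only [lift, Sym2.map_pair_eq, SimpleGraph.mem_edgeSet, SimpleGraph.boxProd_adj,
        SimpleGraph.top_adj] at he
      rcases he with ⟨hab, -⟩ | ⟨hne, -⟩
      · exact hab
      · exact absurd rfl hne
  · intro f hf f' hf' hne v hv hv'
    refine hM.2 _ (mem_proj_iff.1 hf) _ (mem_proj_iff.1 hf')
      (fun h => hne (lift_inj i h)) (v, i) ?_ ?_
    · exact mem_lift.2 ⟨v, hv, rfl⟩
    · exact mem_lift.2 ⟨v, hv', rfl⟩

lemma coveredBy_proj_zero {M : Finset (Sym2 (V × Fin 2))} (hM : IsMatchingSet (H) M) :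
    coveredBy (proj 0 M) = copyOneCovered M := by
  ext v
  simp only [coveredBy, copyOneCovered, mem_filter, mem_univ, true_and]
  constructor
  · rintro ⟨f, hf, hv⟩
    refine ⟨lift 0 f, mem_proj_iff.1 hf, mem_lift.2 ⟨v, hv, rfl⟩, lift_isDiag 0 f⟩
  · rintro ⟨e, heM, hve, hdiag⟩
    obtain ⟨f, hfE, i, rfl⟩ := copy_edge_form (hM.1 e heM) hdiag
    obtain ⟨u, hu, huv⟩ := mem_lift.1 hve
    obtain ⟨rfl, rfl⟩ := Prod.mk.inj huv
    exact ⟨f, mem_proj_iff.2 heM, hu⟩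

variable {S : Finset V}

lemma rung_mem_iff {M : Finset (Sym2 (V × Fin 2))} (hM : IsMatchingSet (H) M)
    (hcov : coveredBy M = Finset.univ) (hone : copyOneCovered M = S) (v : V) :
    rung v ∈ M ↔ v ∉ S := by
  constructor
  · intro hr hvS
    rw [← hone] at hvS
    simp only [copyOneCovered, mem_filter, mem_univ, true_and] at hvS
    obtain ⟨e, heM, hve, hdiag⟩ := hvS
    have hne : e ≠ rung v := fun h => rung_not_isDiag v (h ▸ hdiag)
    exact hM.2 e heM (rung v) hr hne (v, 0) hve (mem_rung.2 (Or.inl rfl))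
  · intro hvS
    have : (v, (0 : Fin 2)) ∈ coveredBy M := hcov ▸ mem_univ _
    simp only [coveredBy, mem_filter, mem_univ, true_and] at this
    obtain ⟨e, heM, hve⟩ := this
    by_cases hdiag : (Sym2.map Prod.snd e).IsDiag
    · exact absurd (hone ▸ (by
        simp only [copyOneCovered, mem_filter, mem_univ, true_and]
        exact ⟨e, heM, hve, hdiag⟩ : v ∈ copyOneCovered M)) hvS
    · obtain ⟨u, rfl⟩ := rung_edge_form (hM.1 e heM) hdiag
      rwa [show u = v from (fst_of_mem_rung hve).symm] at heM

lemma coveredBy_proj_one {M : Finset (Sym2 (V × Fin 2))} (hM : IsMatchingSet (H) M)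
    (hcov : coveredBy M = Finset.univ) (hone : copyOneCovered M = S) :
    coveredBy (proj 1 M) = S := by
  ext v
  simp only [coveredBy, mem_filter, mem_univ, true_and]
  constructor
  · rintro ⟨f, hf, hv⟩
    by_contra hvS
    have hr : rung v ∈ M := (rung_mem_iff hM hcov hone v).2 hvS
    have hne : lift 1 f ≠ rung v := fun h => rung_not_isDiag v (h ▸ lift_isDiag 1 f)
    exact hM.2 _ (mem_proj_iff.1 hf) _ hr hne (v, 1)
      (mem_lift.2 ⟨v, hv, rfl⟩) (mem_rung.2 (Or.inr rfl))
  · intro hvS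
    have : (v, (1 : Fin 2)) ∈ coveredBy M := hcov ▸ mem_univ _
    simp only [coveredBy, mem_filter, mem_univ, true_and] at this
    obtain ⟨e, heM, hve⟩ := this
    by_cases hdiag : (Sym2.map Prod.snd e).IsDiag
    · obtain ⟨f, hfE, i, rfl⟩ := copy_edge_form (hM.1 e heM) hdiag
      obtain ⟨u, hu, huv⟩ := mem_lift.1 hve
      obtain ⟨rfl, rfl⟩ := Prod.mk.inj huv
      exact ⟨f, mem_proj_iff.2 heM, hu⟩
    · obtain ⟨u, rfl⟩ := rung_edge_form (hM.1 e heM) hdiag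
      rw [show u = v from (fst_of_mem_rung hve).symm] at heM
      exact absurd ((rung_mem_iff hM hcov hone v).1 heM) (not_not_intro hvS)

lemma exists_mem_sym2 (f : Sym2 V) : ∃ a, a ∈ f := by
  induction f using Sym2.inductionOn with
  | hf a b => exact ⟨a, by simp [Sym2.mem_iff]⟩

lemma lift_level_eq {i j : Fin 2} {f f' : Sym2 V} (h : lift i f = lift j f') : i = j := by
  obtain ⟨a, ha⟩ := exists_mem_sym2 f
  have : ((a, i) : V × Fin 2) ∈ lift j f' := h ▸ mem_lift.2 ⟨a, ha, rfl⟩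
  exact snd_of_mem_lift this

lemma lift_ne_rung (i : Fin 2) (f : Sym2 V) (v : V) : lift i f ≠ rung v :=
  fun h => rung_not_isDiag v (h ▸ lift_isDiag i f)

lemma rung_inj : Function.Injective (rung (V := V)) := by
  intro u v h
  have : ((u, (0 : Fin 2)) : V × Fin 2) ∈ rung v := h ▸ mem_rung.2 (Or.inl rfl)
  exact fst_of_mem_rung this

noncomputable def ofCopies (S : Finset V) (M₁ M₂ : Finset (Sym2 V)) :
    Finset (Sym2 (V × Fin 2)) :=
  M₁.image (lift 0) ∪ M₂.image (lift 1) ∪ Sᶜ.image rung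

lemma mem_ofCopies {S : Finset V} {M₁ M₂ : Finset (Sym2 V)} {e : Sym2 (V × Fin 2)} :
    e ∈ ofCopies S M₁ M₂ ↔
      (∃ f ∈ M₁, e = lift 0 f) ∨ (∃ f ∈ M₂, e = lift 1 f) ∨ ∃ v ∉ S, e = rung v := by
  simp only [ofCopies, mem_union, mem_image, mem_compl, or_assoc]
  constructor
  · rintro (⟨f, hf, rfl⟩ | ⟨f, hf, rfl⟩ | ⟨v, hv, rfl⟩)
    · exact Or.inl ⟨f, hf, rfl⟩
    · exact Or.inr (Or.inl ⟨f, hf, rfl⟩)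
    · exact Or.inr (Or.inr ⟨v, hv, rfl⟩)
  · rintro (⟨f, hf, rfl⟩ | ⟨f, hf, rfl⟩ | ⟨v, hv, rfl⟩)
    · exact Or.inl ⟨f, hf, rfl⟩
    · exact Or.inr (Or.inl ⟨f, hf, rfl⟩)
    · exact Or.inr (Or.inr ⟨v, hv, rfl⟩)

lemma ofCopies_isMatchingSet {M₁ M₂ : Finset (Sym2 V)}
    (h1 : IsMatchingSet G M₁) (hc1 : coveredBy M₁ = S)
    (h2 : IsMatchingSet G M₂) (hc2 : coveredBy M₂ = S) :
    IsMatchingSet (H) (ofCopies S M₁ M₂) := by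
  have memS : ∀ {N : Finset (Sym2 V)}, coveredBy N = S → ∀ {f}, f ∈ N → ∀ {u}, u ∈ f →
      u ∈ S := by
    intro N hN f hf u hu
    rw [← hN]
    simp only [coveredBy, mem_filter, mem_univ, true_and]
    exact ⟨f, hf, hu⟩
  constructor
  · intro e he
    rcases mem_ofCopies.1 he with ⟨f, hf, rfl⟩ | ⟨f, hf, rfl⟩ | ⟨v, hv, rfl⟩
    · exact lift_mem_edgeSet (h1.1 f hf)
    · exact lift_mem_edgeSet (h2.1 f hf)
    · exact rung_mem_edgeSet v
  · intro e he e' he' hne x hx hx'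
    rcases mem_ofCopies.1 he with ⟨f, hf, rfl⟩ | ⟨f, hf, rfl⟩ | ⟨v, hv, rfl⟩ <;>
      rcases mem_ofCopies.1 he' with ⟨f', hf', rfl⟩ | ⟨f', hf', rfl⟩ | ⟨v', hv', rfl⟩
    · obtain ⟨u, hu, rfl⟩ := mem_lift.1 hx
      obtain ⟨u', hu', hx'eq⟩ := mem_lift.1 hx'
      obtain ⟨rfl, -⟩ := Prod.mk.inj hx'eq
      exact h1.2 f hf f' hf' (fun h => hne (h ▸ rfl)) u hu hu'
    · exact absurd ((snd_of_mem_lift hx).symm.trans (snd_of_mem_lift hx')) (by decide)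
    · obtain ⟨u, hu, rfl⟩ := mem_lift.1 hx
      exact hv' ((fst_of_mem_rung hx' : u = v') ▸ memS hc1 hf hu)
    · exact absurd ((snd_of_mem_lift hx).symm.trans (snd_of_mem_lift hx')) (by decide)
    · obtain ⟨u, hu, rfl⟩ := mem_lift.1 hx
      obtain ⟨u', hu', hx'eq⟩ := mem_lift.1 hx'
      obtain ⟨rfl, -⟩ := Prod.mk.inj hx'eq
      exact h2.2 f hf f' hf' (fun h => hne (h ▸ rfl)) u hu hu'
    · obtain ⟨u, hu, rfl⟩ := mem_lift.1 hx
      exact hv' ((fst_of_mem_rung hx' : u = v') ▸ memS hc2 hf hu)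
    · obtain ⟨u', hu', rfl⟩ := mem_lift.1 hx'
      exact hv ((fst_of_mem_rung hx : u' = v) ▸ memS hc1 hf' hu')
    · obtain ⟨u', hu', rfl⟩ := mem_lift.1 hx'
      exact hv ((fst_of_mem_rung hx : u' = v) ▸ memS hc2 hf' hu')
    · exact hne (congrArg rung ((fst_of_mem_rung hx).symm.trans (fst_of_mem_rung hx')))

lemma coveredBy_ofCopies {M₁ M₂ : Finset (Sym2 V)}
    (hc1 : coveredBy M₁ = S) (hc2 : coveredBy M₂ = S) :
    coveredBy (ofCopies S M₁ M₂) = Finset.univ := by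
  ext x
  obtain ⟨v, i⟩ := x
  simp only [coveredBy, mem_filter, mem_univ, true_and, iff_true]
  by_cases hvS : v ∈ S
  · fin_cases i
    · have : v ∈ coveredBy M₁ := hc1 ▸ hvS
      simp only [coveredBy, mem_filter, mem_univ, true_and] at this
      obtain ⟨f, hf, hv⟩ := this
      exact ⟨lift 0 f, mem_ofCopies.2 (Or.inl ⟨f, hf, rfl⟩), mem_lift.2 ⟨v, hv, rfl⟩⟩
    · have : v ∈ coveredBy M₂ := hc2 ▸ hvS
      simp only [coveredBy, mem_filter, mem_univ, true_and] at this
      obtain ⟨f, hf, hv⟩ := this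
      exact ⟨lift 1 f, mem_ofCopies.2 (Or.inr (Or.inl ⟨f, hf, rfl⟩)), mem_lift.2 ⟨v, hv, rfl⟩⟩
  · refine ⟨rung v, mem_ofCopies.2 (Or.inr (Or.inr ⟨v, hvS, rfl⟩)), ?_⟩
    fin_cases i
    · exact mem_rung.2 (Or.inl rfl)
    · exact mem_rung.2 (Or.inr rfl)

lemma copyOneCovered_ofCopies {M₁ M₂ : Finset (Sym2 V)}
    (hc1 : coveredBy M₁ = S) :
    copyOneCovered (ofCopies S M₁ M₂) = S := by
  ext v
  simp only [copyOneCovered, mem_filter, mem_univ, true_and]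
  constructor
  · rintro ⟨e, he, hve, hdiag⟩
    rcases mem_ofCopies.1 he with ⟨f, hf, rfl⟩ | ⟨f, hf, rfl⟩ | ⟨u, hu, rfl⟩
    · obtain ⟨u, hu, huv⟩ := mem_lift.1 hve
      obtain ⟨rfl, -⟩ := Prod.mk.inj huv
      rw [← hc1]
      simp only [coveredBy, mem_filter, mem_univ, true_and]
      exact ⟨f, hf, hu⟩
    · have := snd_of_mem_lift hve
      simp at this
    · exact absurd hdiag (rung_not_isDiag u)
  · intro hvS
    have : v ∈ coveredBy M₁ := hc1 ▸ hvS
    simp only [coveredBy, mem_filter, mem_univ, true_and] at this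
    obtain ⟨f, hf, hv⟩ := this
    exact ⟨lift 0 f, mem_ofCopies.2 (Or.inl ⟨f, hf, rfl⟩), mem_lift.2 ⟨v, hv, rfl⟩,
      lift_isDiag 0 f⟩

lemma proj_ofCopies {M₁ M₂ : Finset (Sym2 V)} (i : Fin 2) :
    proj i (ofCopies S M₁ M₂) = if i = 0 then M₁ else M₂ := by
  ext f
  rw [mem_proj_iff, mem_ofCopies]
  constructor
  · rintro (⟨f', hf', h⟩ | ⟨f', hf', h⟩ | ⟨v, hv, h⟩)
    · have hi : i = 0 := lift_level_eq h
      rw [hi] at h ⊢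
      rw [lift_inj 0 h]
      simp [hf']
    · have hi : i = 1 := lift_level_eq h
      rw [hi] at h ⊢
      rw [lift_inj 1 h]
      simp [hf']
    · exact absurd h (lift_ne_rung i f v)
  · intro hf
    fin_cases i
    · exact Or.inl ⟨f, by simpa using hf, rfl⟩
    · exact Or.inr (Or.inl ⟨f, by simpa using hf, rfl⟩)

lemma ofCopies_proj {M : Finset (Sym2 (V × Fin 2))} (hM : IsMatchingSet (H) M)
    (hcov : coveredBy M = Finset.univ) (hone : copyOneCovered M = S) :
    ofCopies S (proj 0 M) (proj 1 M) = M := by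
  ext e
  rw [mem_ofCopies]
  constructor
  · rintro (⟨f, hf, rfl⟩ | ⟨f, hf, rfl⟩ | ⟨v, hv, rfl⟩)
    · exact mem_proj_iff.1 hf
    · exact mem_proj_iff.1 hf
    · exact (rung_mem_iff hM hcov hone v).2 hv
  · intro he
    by_cases hdiag : (Sym2.map Prod.snd e).IsDiag
    · obtain ⟨f, hfE, i, rfl⟩ := copy_edge_form (hM.1 e he) hdiag
      fin_cases i
      · exact Or.inl ⟨f, mem_proj_iff.2 he, rfl⟩
      · exact Or.inr (Or.inl ⟨f, mem_proj_iff.2 he, rfl⟩)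
    · obtain ⟨v, rfl⟩ := rung_edge_form (hM.1 e he) hdiag
      exact Or.inr (Or.inr ⟨v, (rung_mem_iff hM hcov hone v).1 he, rfl⟩)

lemma fiber_filter_card {M : Finset (Sym2 (V × Fin 2))} (hM : IsMatchingSet (H) M)
    (hcov : coveredBy M = Finset.univ) (hone : copyOneCovered M = S) :
    (M.filter fun e => (Sym2.map Prod.snd e).IsDiag).card = S.card := by
  have h0 : S.card = 2 * (proj 0 M).card := by
    rw [← hone, ← coveredBy_proj_zero hM, coveredBy_card (proj_isMatchingSet hM 0)]
  have h1 : S.card = 2 * (proj 1 M).card := by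
    rw [← coveredBy_proj_one hM hcov hone, coveredBy_card (proj_isMatchingSet hM 1)]
  have hset : (M.filter fun e => (Sym2.map Prod.snd e).IsDiag)
      = (proj 0 M).image (lift 0) ∪ (proj 1 M).image (lift 1) := by
    ext e
    simp only [mem_filter, mem_union, mem_image]
    constructor
    · rintro ⟨heM, hdiag⟩
      obtain ⟨f, hfE, i, rfl⟩ := copy_edge_form (hM.1 e heM) hdiag
      fin_cases i
      · exact Or.inl ⟨f, mem_proj_iff.2 heM, rfl⟩
      · exact Or.inr ⟨f, mem_proj_iff.2 heM, rfl⟩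
    · rintro (⟨f, hf, rfl⟩ | ⟨f, hf, rfl⟩)
      · exact ⟨mem_proj_iff.1 hf, lift_isDiag 0 f⟩
      · exact ⟨mem_proj_iff.1 hf, lift_isDiag 1 f⟩
  have hdisj : Disjoint ((proj 0 M).image (lift 0)) ((proj 1 M).image (lift 1)) := by
    rw [Finset.disjoint_left]
    rintro e he he'
    obtain ⟨f, -, rfl⟩ := mem_image.1 he
    obtain ⟨f', -, heq⟩ := mem_image.1 he'
    exact absurd (lift_level_eq heq) (by decide)
  rw [hset, card_union_of_disjoint hdisj,
    card_image_of_injective _ (lift_inj 0), card_image_of_injective _ (lift_inj 1)]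
  omega

lemma fiber_wK2 (c : ℝ) {M : Finset (Sym2 (V × Fin 2))} (hM : IsMatchingSet (H) M)
    (hcov : coveredBy M = Finset.univ) (hone : copyOneCovered M = S) :
    wK2 c M = c ^ (2 * S.card) := by
  rw [wK2, fiber_filter_card hM hcov hone]

lemma fiber_card (G : SimpleGraph V) (S : Finset V) :
    (univ.filter fun M : Finset (Sym2 (V × Fin 2)) =>
      (IsMatchingSet (G.boxProd (⊤ : SimpleGraph (Fin 2))) M ∧ coveredBy M = Finset.univ) ∧
        copyOneCovered M = S).card = PMcount G S ^ 2 := by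
  rw [sq, PMcount, ← Finset.card_product]
  refine Finset.card_bij' (fun M _ => (proj 0 M, proj 1 M))
    (fun p _ => ofCopies S p.1 p.2) ?_ ?_ ?_ ?_
  · rintro M hM
    simp only [mem_filter, mem_univ, true_and] at hM
    obtain ⟨⟨h1, h2⟩, h3⟩ := hM
    simp only [Finset.mem_product, mem_filter, mem_univ, true_and]
    exact ⟨⟨proj_isMatchingSet h1 0, (coveredBy_proj_zero h1).trans h3⟩,
      ⟨proj_isMatchingSet h1 1, coveredBy_proj_one h1 h2 h3⟩⟩
  · rintro ⟨M₁, M₂⟩ hp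
    simp only [Finset.mem_product, mem_filter, mem_univ, true_and] at hp
    obtain ⟨⟨h1, hc1⟩, ⟨h2, hc2⟩⟩ := hp
    simp only [mem_filter, mem_univ, true_and]
    exact ⟨⟨ofCopies_isMatchingSet h1 hc1 h2 hc2, coveredBy_ofCopies hc1 hc2⟩,
      copyOneCovered_ofCopies hc1⟩
  · intro M hM
    simp only [mem_filter, mem_univ, true_and] at hM
    exact ofCopies_proj hM.1.1 hM.1.2 hM.2
  · rintro ⟨M₁, M₂⟩ hp
    simp only [proj_ofCopies]
    norm_num

lemma fiber_sum (G : SimpleGraph V) (S : Finset V) (c : ℝ) :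
    (∑ M ∈ univ.filter (fun M : Finset (Sym2 (V × Fin 2)) =>
      (IsMatchingSet (G.boxProd (⊤ : SimpleGraph (Fin 2))) M ∧ coveredBy M = Finset.univ) ∧
        copyOneCovered M = S), wK2 c M)
    = c ^ (2 * S.card) * (PMcount G S : ℝ) ^ 2 := by
  rw [Finset.sum_congr rfl (fun M hM => by
    simp only [mem_filter, mem_univ, true_and] at hM
    exact fiber_wK2 c hM.1.1 hM.1.2 hM.2)]
  rw [Finset.sum_const, fiber_card G S, nsmul_eq_mul]
  push_cast
  ring

lemma perfect_iff_card {M : Finset (Sym2 (V × Fin 2))} (hM : IsMatchingSet (H) M) :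
    M.card = Fintype.card V ↔ coveredBy M = Finset.univ := by
  have hc := coveredBy_card hM
  constructor
  · intro h
    apply Finset.eq_univ_of_card
    rw [hc, h, Fintype.card_prod, Fintype.card_fin, mul_comm]
  · intro h
    rw [h, Finset.card_univ, Fintype.card_prod, Fintype.card_fin] at hc
    omega

lemma Zk_eq (G : SimpleGraph V) (c : ℝ) :
    Zk G c (Fintype.card V)
      = ∑ T ∈ (Finset.univ : Finset V).powerset,
          c ^ (2 * T.card) * (PMcount G T : ℝ) ^ 2 := by
  have hfc : ∀ M ∈ (Finset.univ : Finset (Finset (Sym2 (V × Fin 2)))),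
      (IsMatchingSet (G.boxProd (⊤ : SimpleGraph (Fin 2))) M ∧ M.card = Fintype.card V) ↔
      (IsMatchingSet (G.boxProd (⊤ : SimpleGraph (Fin 2))) M ∧ coveredBy M = Finset.univ) := by
    intro M _
    constructor
    · rintro ⟨h1, h2⟩; exact ⟨h1, (perfect_iff_card h1).1 h2⟩
    · rintro ⟨h1, h2⟩; exact ⟨h1, (perfect_iff_card h1).2 h2⟩
  rw [Zk, Finset.filter_congr hfc]
  rw [← Finset.sum_fiberwise_of_maps_to (g := copyOneCovered)
    (t := (Finset.univ : Finset V).powerset)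
    (fun M _ => Finset.mem_powerset.2 (Finset.subset_univ _)) (wK2 c)]
  refine Finset.sum_congr rfl fun T _ => ?_
  rw [Finset.filter_filter, ← fiber_sum G T c]

end StmtAux2

/-- Let `μ` be the distribution on perfect matchings of `G □ K₂` with `μ(M) = w(M)/Z_n`.
For every `S ⊆ V`, the `μ`-probability that the vertex set covered by the copy-1 edges of
`M` equals `S × {1}` is exactly `c^{2|S|}·PM(S)² / Σ_{T⊆V} c^{2|T|}·PM(T)²`: the pushforward
of `μ` under `M ↦ S_M` is the distribution `μ_{GBS,G}(S) ∝ c^{2|S|}·PM(S)²`. -/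
theorem stmt2 {V : Type*} [Fintype V] (G : SimpleGraph V) (c : ℝ) (hc : 0 < c)
    (S : Finset V) :
    (∑ M ∈ Finset.univ.filter (fun M : Finset (Sym2 (V × Fin 2)) =>
        (IsMatchingSet (G.boxProd (⊤ : SimpleGraph (Fin 2))) M ∧
          coveredBy M = Finset.univ) ∧ copyOneCovered M = S), wK2 c M)
      / Zk G c (Fintype.card V)
    = c ^ (2 * S.card) * (PMcount G S : ℝ) ^ 2 /
        ∑ T ∈ (Finset.univ : Finset V).powerset,
          c ^ (2 * T.card) * (PMcount G T : ℝ) ^ 2 := by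
  rw [StmtAux2.fiber_sum G S c, StmtAux2.Zk_eq G c]
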